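/- Let Γ be a group generated by elements g₁,…,gₙ, let z ∈ ℤ * Γ denote the image of the generator 1 of ℤ, let Γ̃ be the subgroup of ℤ * Γ generated by zg₁,…,zgₙ, and let H be the subgroup of Γ generated by {gᵢ⁻¹gⱼ : 1 ≤ i,j ≤ n}. If H ≠ Γ, then the group homomorphism φ : ℤ * H → ℤ * Γ determined by sending the generator 1 of ℤ to z·g₁ and each h ∈ H to itself (under the canonical inclusion H ≤ Γ ≤ ℤ * Γ) is injective and has image Γ̃. In particular, Γ̃ is isomorphic to ℤ * H via an isomorphism sending zg₁ to the generator of ℤ and zgᵢ to g₁⁻¹gᵢ for i = 2,…,n. -/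

import Mathlib

open Monoid
open scoped Coprod

universe u
namespace StmtAux
open Monoid.CoprodI

def Fam (K : Type u) : Bool → Type u := fun b => cond b (ULift.{u} (Multiplicative ℤ)) K

instance famGroup (K : Type u) [Group K] : ∀ b, Group (Fam K b)
  | true => inferInstanceAs (Group (ULift (Multiplicative ℤ)))
  | false => inferInstanceAs (Group K)

instance famDecEq (K : Type u) [DecidableEq K] : ∀ b, DecidableEq (Fam K b)
  | true => inferInstanceAs (DecidableEq (ULift (Multiplicative ℤ)))
  | false => inferInstanceAs (DecidableEq K)

variable (K : Type u) [Group K]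

def zl : Fam K true := ULift.up (Multiplicative.ofAdd (1 : ℤ))

def kl (γ : K) : Fam K false := γ

def zlHom : Multiplicative ℤ →* Fam K true :=
  (MulEquiv.ulift (α := Multiplicative ℤ)).symm.toMonoidHom

def klHom : K →* Fam K false := MonoidHom.id K

def toI : (Multiplicative ℤ) ∗ K →* CoprodI (Fam K) :=
  Coprod.lift ((CoprodI.of (M := Fam K) (i := true)).comp (zlHom K))
    ((CoprodI.of (M := Fam K) (i := false)).comp (klHom K))

def ofIFun : ∀ b, Fam K b →* (Multiplicative ℤ) ∗ K
  | true => Coprod.inl.comp (MulEquiv.ulift (α := Multiplicative ℤ)).toMonoidHom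
  | false => Coprod.inr

def ofI : CoprodI (Fam K) →* (Multiplicative ℤ) ∗ K := CoprodI.lift (ofIFun K)

lemma ofI_comp_toI : (ofI K).comp (toI K) = MonoidHom.id _ := by
  apply Coprod.hom_ext <;> ext x <;> rfl

lemma toI_comp_ofI : (toI K).comp (ofI K) = MonoidHom.id _ := by
  apply CoprodI.ext_hom
  intro b
  cases b <;> ext x <;> rfl

lemma toI_injective : Function.Injective (toI K) := by
  intro a b hab
  have h1 := DFunLike.congr_fun (ofI_comp_toI K) a
  have h2 := DFunLike.congr_fun (ofI_comp_toI K) b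
  simp only [MonoidHom.comp_apply, MonoidHom.id_apply] at h1 h2
  rw [← h1, ← h2, hab]

lemma toI_inl (x : Multiplicative ℤ) :
    toI K (Coprod.inl x) = CoprodI.of (zlHom K x) := rfl

lemma toI_inr (γ : K) : toI K (Coprod.inr γ) = CoprodI.of (kl K γ) := rfl

section WordLemmas

variable {ι : Type*} [DecidableEq ι] {M : ι → Type*} [∀ i, Group (M i)]
  [∀ i, DecidableEq (M i)]

lemma smul_cons_ne {i j : ι} (hij : i ≠ j) (m : M j) (hm : m ≠ 1) (m' : M i)
    (w : Word M) (h2 : w.fstIdx ≠ some i) (h1 : m' ≠ 1) :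
    CoprodI.of m • Word.cons m' w h2 h1 =
      Word.cons m (Word.cons m' w h2 h1) (by simp [hij]) hm :=
  Word.cons_eq_smul.symm

lemma smul_empty' {i : ι} (m : M i) (hm : m ≠ 1) :
    CoprodI.of m • (Word.empty : Word M) =
      Word.cons m Word.empty (by simp [Word.fstIdx]) hm :=
  Word.cons_eq_smul.symm

lemma smul_cons_same {i : ι} (m m' : M i) (w : Word M) (h2 : w.fstIdx ≠ some i)
    (h1 : m' ≠ 1) (hmm : m * m' ≠ 1) :
    CoprodI.of m • Word.cons m' w h2 h1 = Word.cons (m * m') w h2 hmm := by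
  rw [Word.cons_eq_smul, smul_smul, ← map_mul]
  exact Word.cons_eq_smul.symm

end WordLemmas
section PingPong

variable {Γ : Type u} [Group Γ] [DecidableEq Γ]

/-- the element `z g₁` on the `CoprodI` side -/
def TT (g1 : Γ) : CoprodI (Fam Γ) := CoprodI.of (zl Γ) * CoprodI.of (kl Γ g1)

lemma zl_ne_one : zl Γ ≠ 1 := by
  intro hc
  exact one_ne_zero (congrArg (fun x : Fam Γ true => Multiplicative.toAdd x.down) hc)

lemma zl_inv_ne_one : (zl Γ)⁻¹ ≠ 1 := inv_ne_one.mpr zl_ne_one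

/-- words starting with a `ℤ`-letter -/
def Az (Γ : Type u) [Group Γ] : Set (Word (Fam Γ)) :=
  {w | ∃ (c : Fam Γ true) (w' : Word (Fam Γ)) (h2 : w'.fstIdx ≠ some true)
    (h1 : c ≠ 1), w = Word.cons c w' h2 h1}

/-- words starting with the letter `g₁⁻¹` -/
def Ag (Γ : Type u) [Group Γ] (g1 : Γ) : Set (Word (Fam Γ)) :=
  {w | ∃ (w' : Word (Fam Γ)) (h2 : w'.fstIdx ≠ some false)
    (h1 : kl Γ g1⁻¹ ≠ 1), w = Word.cons (kl Γ g1⁻¹) w' h2 h1}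

/-- the empty word together with words starting with a `Γ`-letter other than `g₁⁻¹` -/
def Bs (Γ : Type u) [Group Γ] (g1 : Γ) : Set (Word (Fam Γ)) :=
  {w | w = Word.empty ∨ ∃ (γ : Γ) (w' : Word (Fam Γ)) (h2 : w'.fstIdx ≠ some false)
    (h1 : kl Γ γ ≠ 1), γ ≠ g1⁻¹ ∧ w = Word.cons (kl Γ γ) w' h2 h1}

variable {H : Subgroup Γ} {g1 : Γ}

lemma g1_ne_one (hg1 : g1 ∉ H) : g1 ≠ 1 := fun hc => hg1 (hc ▸ H.one_mem)

lemma kl_ne_one {γ : Γ} (h : γ ≠ 1) : kl Γ γ ≠ 1 := h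

lemma h_smul_mem (h : Γ) (hmem : h ∈ H) (hne : h ≠ 1) (hg1 : g1 ∉ H) :
    ∀ w ∈ Az Γ ∪ Ag Γ g1, CoprodI.of (kl Γ h) • w ∈ Bs Γ g1 := by
  rintro w (⟨c, w', h2, h1, rfl⟩ | ⟨w', h2, h1, rfl⟩)
  · rw [smul_cons_ne (by simp) (kl Γ h) (kl_ne_one hne) c w' h2 h1]
    refine Or.inr ⟨h, _, _, kl_ne_one hne, ?_, rfl⟩
    intro hc
    exact hg1 (by rw [← inv_inv g1, ← hc]; exact H.inv_mem hmem)
  · have hmul : kl Γ h * kl Γ g1⁻¹ ≠ 1 := by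
      intro hc
      apply hg1
      have h' : h * g1⁻¹ = 1 := hc
      have hh : h = g1 := mul_inv_eq_one.mp h'
      rwa [← hh]
    rw [smul_cons_same (kl Γ h) (kl Γ g1⁻¹) w' h2 h1 hmul]
    refine Or.inr ⟨h * g1⁻¹, _, _, hmul, ?_, rfl⟩
    intro hc
    have : h = 1 := by
      have := congrArg (fun x => x * g1) hc
      simpa using this
    exact hne this

lemma Tpos_step (hg1 : g1 ∉ H) :
    ∀ w, w ∈ Bs Γ g1 ∪ Az Γ → TT g1 • w ∈ Az Γ := by
  have hg1ne : g1 ≠ 1 := g1_ne_one hg1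
  rintro w ((rfl | ⟨γ, w', h2, h1, hγ, rfl⟩) | ⟨c, w', h2, h1, rfl⟩)
  · rw [TT, mul_smul, smul_empty' (kl Γ g1) (kl_ne_one hg1ne),
      smul_cons_ne (by simp) (zl Γ) zl_ne_one _ _ _ _]
    exact ⟨zl Γ, _, _, zl_ne_one, rfl⟩
  · have hmul : kl Γ g1 * kl Γ γ ≠ 1 := by
      intro hc
      exact hγ ((mul_eq_one_iff_inv_eq.mp hc).symm)
    rw [TT, mul_smul, smul_cons_same (kl Γ g1) (kl Γ γ) w' h2 h1 hmul,
      smul_cons_ne (by simp) (zl Γ) zl_ne_one _ _ _ _]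
    exact ⟨zl Γ, _, _, zl_ne_one, rfl⟩
  · rw [TT, mul_smul, smul_cons_ne (by simp) (kl Γ g1) (kl_ne_one hg1ne) c w' h2 h1,
      smul_cons_ne (by simp) (zl Γ) zl_ne_one _ _ _ _]
    exact ⟨zl Γ, _, _, zl_ne_one, rfl⟩

lemma Tneg_step (hg1 : g1 ∉ H) :
    ∀ w, (w = Word.empty ∨ ∃ (γ : Γ) (w' : Word (Fam Γ)) (h2 : w'.fstIdx ≠ some false)
      (h1 : kl Γ γ ≠ 1), w = Word.cons (kl Γ γ) w' h2 h1) →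
      (TT g1)⁻¹ • w ∈ Ag Γ g1 := by
  have hg1ne : g1 ≠ 1 := g1_ne_one hg1
  have hTinv : (TT g1)⁻¹ = CoprodI.of (kl Γ g1⁻¹) * CoprodI.of ((zl Γ)⁻¹) := by
    rw [TT, mul_inv_rev, ← map_inv, ← map_inv]
    rfl
  rintro w (rfl | ⟨γ, w', h2, h1, rfl⟩)
  · rw [hTinv, mul_smul, smul_empty' ((zl Γ)⁻¹) zl_inv_ne_one,
      smul_cons_ne (by simp) (kl Γ g1⁻¹) (kl_ne_one (inv_ne_one.mpr hg1ne)) _ _ _ _]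
    exact ⟨_, _, kl_ne_one (inv_ne_one.mpr hg1ne), rfl⟩
  · rw [hTinv, mul_smul, smul_cons_ne (by simp) ((zl Γ)⁻¹) zl_inv_ne_one _ _ _ _,
      smul_cons_ne (by simp) (kl Γ g1⁻¹) (kl_ne_one (inv_ne_one.mpr hg1ne)) _ _ _ _]
    exact ⟨_, _, kl_ne_one (inv_ne_one.mpr hg1ne), rfl⟩

lemma Tpow_pos (hg1 : g1 ∉ H) (m : ℕ) :
    ∀ w ∈ Bs Γ g1, (TT g1) ^ (m + 1) • w ∈ Az Γ := by
  induction m with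
  | zero => intro w hw; rw [pow_one]; exact Tpos_step hg1 w (Or.inl hw)
  | succ m ih =>
    intro w hw
    rw [pow_succ', mul_smul]
    exact Tpos_step hg1 _ (Or.inr (ih w hw))

lemma Tpow_neg (hg1 : g1 ∉ H) (m : ℕ) :
    ∀ w ∈ Bs Γ g1, ((TT g1)⁻¹) ^ (m + 1) • w ∈ Ag Γ g1 := by
  induction m with
  | zero =>
    intro w hw
    rw [pow_one]
    refine Tneg_step hg1 w ?_
    rcases hw with rfl | ⟨γ, w', h2, h1, hγ, rfl⟩
    · exact Or.inl rfl
    · exact Or.inr ⟨γ, w', h2, h1, rfl⟩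
  | succ m ih =>
    intro w hw
    rw [pow_succ', mul_smul]
    obtain ⟨w', h2, h1, heq⟩ := ih w hw
    rw [heq]
    exact Tneg_step hg1 _ (Or.inr ⟨g1⁻¹, w', h2, h1, rfl⟩)

lemma Tzpow (hg1 : g1 ∉ H) (k : ℤ) (hk : k ≠ 0) :
    ∀ w ∈ Bs Γ g1, (TT g1) ^ k • w ∈ Az Γ ∪ Ag Γ g1 := by
  intro w hw
  rcases k with n | n
  · cases n with
    | zero => exact absurd rfl hk
    | succ m =>
      rw [show (Int.ofNat (m + 1)) = ((m + 1 : ℕ) : ℤ) from rfl, zpow_natCast]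
      exact Or.inl (Tpow_pos hg1 m w hw)
  · rw [zpow_negSucc, ← inv_pow]
    exact Or.inr (Tpow_neg hg1 n w hw)

lemma disjointAB (hg1 : g1 ∉ H) : Disjoint (Az Γ ∪ Ag Γ g1) (Bs Γ g1) := by
  rw [Set.disjoint_left]
  rintro w (⟨c, w', h2, h1, rfl⟩ | ⟨w', h2, h1, rfl⟩) (hc | ⟨γ, w'', h2', h1', hγ, hc⟩)
  · exact absurd (congrArg Word.toList hc) (by simp [Word.cons])
  · have := congrArg Word.toList hc
    simp only [Word.cons] at this
    exact absurd (congrArg (fun l => l.head?) this) (by simp)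
  · exact absurd (congrArg Word.toList hc) (by simp [Word.cons])
  · have hlist := congrArg Word.toList hc
    simp only [Word.cons] at hlist
    injection hlist with hhd htl
    injection hhd with hfst hsnd
    have hkl : kl Γ g1⁻¹ = kl Γ γ := hsnd
    have : γ = g1⁻¹ := by
      have h' : (g1⁻¹ : Γ) = γ := hkl
      exact h'.symm
    exact hγ this


/-- The two maps `ℤ → ℤ ∗ Γ` (sending the generator to `z g₁`) and `H ↪ Γ → ℤ ∗ Γ`,
on the `CoprodI` side. -/
def famHom (H : Subgroup Γ) (g1 : Γ) : ∀ b, Fam (↥H) b →* CoprodI (Fam Γ)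
  | true => (zpowersHom _ (TT g1)).comp (MulEquiv.ulift (α := Multiplicative ℤ)).toMonoidHom
  | false => (CoprodI.of (M := Fam Γ) (i := false)).comp ((klHom Γ).comp H.subtype)

theorem famHom_injective (H : Subgroup Γ) (g1 : Γ) (hg1 : g1 ∉ H) :
    Function.Injective (CoprodI.lift (famHom H g1)) := by
  classical
  refine CoprodI.lift_injective_of_ping_pong (famHom H g1) ?_
    (fun b => cond b (Az Γ ∪ Ag Γ g1) (Bs Γ g1)) ?_ ?_ ?_
  · -- cardinality
    refine Or.inr ⟨true, ?_⟩
    haveI : Infinite (Fam (↥H) true) := inferInstanceAs (Infinite (ULift (Multiplicative ℤ)))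
    have h1 : ((3 : ℕ) : Cardinal) ≤ Cardinal.aleph0 := (Cardinal.nat_lt_aleph0 3).le
    have h2 : Cardinal.aleph0 ≤ Cardinal.mk (Fam (↥H) true) := Cardinal.aleph0_le_mk _
    have h3 : ((3 : ℕ) : Cardinal) = (3 : Cardinal) := by norm_num
    rw [← h3]
    exact h1.trans h2
  · -- nonempty
    intro b
    cases b
    · exact ⟨Word.empty, Or.inl rfl⟩
    · exact ⟨Word.cons (zl Γ) Word.empty (by simp [Word.fstIdx]) zl_ne_one,
        Or.inl ⟨zl Γ, _, _, zl_ne_one, rfl⟩⟩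
  · -- disjoint
    intro b b' hbb'
    cases b <;> cases b'
    · exact absurd rfl hbb'
    · exact (disjointAB hg1).symm
    · exact disjointAB hg1
    · exact absurd rfl hbb'
  · -- ping pong
    intro b b' hbb'
    cases b <;> cases b'
    · exact absurd rfl hbb'
    · -- b = false (the H factor), b' = true : h • (Az ∪ Ag) ⊆ Bs
      intro h hne x hx
      rw [Set.mem_smul_set] at hx
      obtain ⟨w, hw, rfl⟩ := hx
      have heval : famHom H g1 false h = CoprodI.of (kl Γ (H.subtype h)) := rfl
      rw [heval]
      refine h_smul_mem (H.subtype h) (show ↥H from h).2 ?_ hg1 w hw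
      intro hc
      exact hne (Subtype.ext hc)
    · -- b = true (the ℤ factor), b' = false : T^k • Bs ⊆ Az ∪ Ag
      intro c hne x hx
      rw [Set.mem_smul_set] at hx
      obtain ⟨w, hw, rfl⟩ := hx
      have hk : Multiplicative.toAdd (MulEquiv.ulift (α := Multiplicative ℤ) c) ≠ 0 := by
        intro hc
        apply hne
        have h1 : MulEquiv.ulift (α := Multiplicative ℤ) c = 1 := by
          rw [← ofAdd_toAdd (MulEquiv.ulift (α := Multiplicative ℤ) c), hc]
          rfl
        exact MulEquiv.ulift.injective (h1.trans rfl)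
      have heval : famHom H g1 true c
          = (TT g1) ^ (Multiplicative.toAdd (MulEquiv.ulift (α := Multiplicative ℤ) c)) := rfl
      rw [heval]
      exact Tzpow hg1 _ hk w hw
    · exact absurd rfl hbb'

end PingPong
end StmtAux

/-- Let `Γ` be generated by `g₁,…,gₙ`, `z` the generator of the `ℤ` factor of `ℤ ∗ Γ`,
`Γ̃ ≤ ℤ ∗ Γ` the subgroup generated by `z g₁, …, z gₙ`, and `H ≤ Γ` the subgroup
generated by the `gᵢ⁻¹ gⱼ`.  If `H ≠ Γ`, then the homomorphism
`φ : ℤ ∗ H →* ℤ ∗ Γ` sending the generator of `ℤ` to `z g₁` and each `h ∈ H` to itself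
is injective with image `Γ̃`; in particular `Γ̃ ≅ ℤ ∗ H`. -/

theorem stmt1 (n : ℕ) (hn : 0 < n) (Γ : Type*) [Group Γ] (g : Fin n → Γ)
    (hgen : Subgroup.closure (Set.range g) = ⊤)
    (z : Multiplicative ℤ ∗ Γ)
    (hz : z = Coprod.inl (Multiplicative.ofAdd (1 : ℤ)))
    (Γt : Subgroup (Multiplicative ℤ ∗ Γ))
    (hΓt : Γt = Subgroup.closure (Set.range fun i => z * Coprod.inr (g i)))
    (H : Subgroup Γ)
    (hH : H = Subgroup.closure (Set.range fun p : Fin n × Fin n => (g p.1)⁻¹ * g p.2))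
    (hne : H ≠ ⊤)
    (φ : Multiplicative ℤ ∗ H →* Multiplicative ℤ ∗ Γ)
    (hφ : φ = Coprod.lift (zpowersHom (Multiplicative ℤ ∗ Γ) (z * Coprod.inr (g ⟨0, hn⟩)))
      ((Coprod.inr : Γ →* Multiplicative ℤ ∗ Γ).comp H.subtype)) :
    Function.Injective φ ∧ φ.range = Γt := by
  letI : DecidableEq Γ := Classical.decEq Γ
  have hg1H : g ⟨0, hn⟩ ∉ H := by
    intro hmem
    apply hne
    rw [eq_top_iff, ← hgen, Subgroup.closure_le]
    rintro γ ⟨i, rfl⟩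
    have h2 : (g ⟨0, hn⟩)⁻¹ * g i ∈ H := by
      rw [hH]; exact Subgroup.subset_closure ⟨(⟨0, hn⟩, i), rfl⟩
    have h3 := H.mul_mem hmem h2
    simpa using h3
  have hsquare : (StmtAux.toI Γ).comp φ
      = (CoprodI.lift (StmtAux.famHom H (g ⟨0, hn⟩))).comp (StmtAux.toI (↥H)) := by
    apply Coprod.hom_ext
    · ext
      simp only [hφ, hz, MonoidHom.comp_apply, Coprod.lift_apply_inl, zpowersHom_apply,
        toAdd_ofAdd, zpow_one, map_mul]
      rfl
    · ext γ
      rw [hφ]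
      rfl
  have hinj : Function.Injective φ := by
    intro a b hab
    apply StmtAux.toI_injective (↥H)
    apply StmtAux.famHom_injective H (g ⟨0, hn⟩) hg1H
    have ha := DFunLike.congr_fun hsquare a
    have hb := DFunLike.congr_fun hsquare b
    simp only [MonoidHom.comp_apply] at ha hb
    rw [← ha, ← hb, hab]
  refine ⟨hinj, ?_⟩
  rw [hφ, Coprod.range_lift]
  apply le_antisymm
  · refine sup_le ?_ ?_
    · rw [Subgroup.range_zpowersHom, Subgroup.zpowers_le, hΓt]
      exact Subgroup.subset_closure ⟨⟨0, hn⟩, rfl⟩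
    · have hHle : H ≤ Γt.comap (Coprod.inr : Γ →* Multiplicative ℤ ∗ Γ) := by
        rw [hH]
        apply (Subgroup.closure_le _).mpr
        rintro γ ⟨⟨i, j⟩, rfl⟩
        rw [SetLike.mem_coe, Subgroup.mem_comap]
        have hi : z * Coprod.inr (g i) ∈ Γt := by
          rw [hΓt]; exact Subgroup.subset_closure ⟨i, rfl⟩
        have hj : z * Coprod.inr (g j) ∈ Γt := by
          rw [hΓt]; exact Subgroup.subset_closure ⟨j, rfl⟩
        have key : (Coprod.inr ((g i)⁻¹ * g j) : Multiplicative ℤ ∗ Γ)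
            = (z * Coprod.inr (g i))⁻¹ * (z * Coprod.inr (g j)) := by
          rw [map_mul, map_inv]; group
        rw [key]
        exact mul_mem (inv_mem hi) hj
      rintro x ⟨h, rfl⟩
      exact hHle h.2
  · rw [hΓt]
    apply (Subgroup.closure_le _).mpr
    rintro x ⟨i, rfl⟩
    have h1 : z * Coprod.inr (g ⟨0, hn⟩)
        ∈ (zpowersHom (Multiplicative ℤ ∗ Γ) (z * Coprod.inr (g ⟨0, hn⟩))).range :=
      ⟨Multiplicative.ofAdd 1, by simp [zpowersHom_apply]⟩
    have h2 : (Coprod.inr ((g ⟨0, hn⟩)⁻¹ * g i) : Multiplicative ℤ ∗ Γ)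
        ∈ ((Coprod.inr : Γ →* Multiplicative ℤ ∗ Γ).comp H.subtype).range :=
      ⟨⟨(g ⟨0, hn⟩)⁻¹ * g i, by rw [hH]; exact Subgroup.subset_closure ⟨(⟨0, hn⟩, i), rfl⟩⟩, rfl⟩
    have key : z * Coprod.inr (g i)
        = (z * Coprod.inr (g ⟨0, hn⟩)) * Coprod.inr ((g ⟨0, hn⟩)⁻¹ * g i) := by
      simp [map_mul, map_inv, mul_assoc]
    show z * Coprod.inr (g i) ∈ ((zpowersHom (Multiplicative ℤ ∗ Γ)
        (z * Coprod.inr (g ⟨0, hn⟩))).range ⊔ ((Coprod.inr : Γ →* Multiplicative ℤ ∗ Γ).comp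
        H.subtype).range : Subgroup (Multiplicative ℤ ∗ Γ))
    rw [key]
    exact mul_mem (Subgroup.mem_sup_left h1) (Subgroup.mem_sup_right h2)
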